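/- Let Γ be a connected graph and let Γ̂ be the cone-off of Γ with respect to a family 𝓗 of connected subgraphs. Then for each θ > 0 there exists T = T(θ) (one may take T = 2θ²) such that: if x, y are vertices with d_Γ(x,y) ≥ T, then for every path γ of Γ̂ connecting x and y, either the Γ̂-length of γ is at least θ, or every de-electrification γ̃ of γ has an 𝓗-piece of Γ-length at least θ. In particular T depends only on θ, not on Γ, 𝓗, x or y. -/

import Mathlib

universe u

open SimpleGraph

/-- The cone-off of a graph `G` with respect to a family `𝓗` of (vertex sets of)
subgraphs: an edge is added between each pair of distinct vertices of each `S ∈ 𝓗`. -/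
def coneOff {V : Type u} (G : SimpleGraph V) (𝓗 : Set (Set V)) : SimpleGraph V where
  Adj a b := G.Adj a b ∨ (a ≠ b ∧ ∃ S ∈ 𝓗, a ∈ S ∧ b ∈ S)
  symm := by
    constructor
    intro a b hab
    rcases hab with h | ⟨hne, S, hS, ha, hb⟩
    · exact Or.inl h.symm
    · exact Or.inr ⟨hne.symm, S, hS, hb, ha⟩
  loopless := by
    constructor
    intro a ha
    rcases ha with h | ⟨hne, -⟩
    · exact G.irrefl h
    · exact hne rfl

/-- `δ`-hyperbolicity of a graph via `δ`-slim geodesic triangles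
(geodesics being shortest-path walks). -/
def GraphHyperbolic {V : Type u} (G : SimpleGraph V) (δ : ℝ) : Prop :=
  ∀ (x y z : V) (p : G.Walk x y) (q : G.Walk y z) (r : G.Walk x z),
    p.length = G.dist x y → q.length = G.dist y z → r.length = G.dist x z →
    ∀ v ∈ r.support, ∃ w, (w ∈ p.support ∨ w ∈ q.support) ∧ (G.dist v w : ℝ) ≤ δ

/-- A de-electrification datum: `g` is a `G`-walk obtained from the walk `γ` of the
cone-off by replacing each `𝓗`-component (the edges indexed by `C`) by a `G`-geodesic
between its endpoints; `φ` maps positions along `γ` to positions along `g`. -/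
def IsDeelectrification {V : Type u} (G : SimpleGraph V) (𝓗 : Set (Set V)) {x y : V}
    (γ : (coneOff G 𝓗).Walk x y) (g : G.Walk x y) (φ : ℕ → ℕ) (C : Set ℕ) : Prop :=
  φ 0 = 0 ∧ φ γ.length = g.length ∧
    (∀ i ≤ γ.length, g.getVert (φ i) = γ.getVert i) ∧
    (∀ i < γ.length, i ∈ C →
      (∃ S ∈ 𝓗, γ.getVert i ∈ S ∧ γ.getVert (i + 1) ∈ S) ∧
      φ (i + 1) = φ i + G.dist (γ.getVert i) (γ.getVert (i + 1))) ∧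
    (∀ i < γ.length, i ∉ C →
      G.Adj (γ.getVert i) (γ.getVert (i + 1)) ∧ φ (i + 1) = φ i + 1)

/-- Lemma 2.18, pigeonhole for cone-offs: `T` depends only on `θ`. -/
theorem pigeonhole_for_cone_offs : ∀ θ : ℝ, 0 < θ → ∃ T : ℝ,
    ∀ (V : Type u) (G : SimpleGraph V) (𝓗 : Set (Set V)),
      G.Connected → (∀ S ∈ 𝓗, (G.induce S).Connected) →
      ∀ x y : V, T ≤ (G.dist x y : ℝ) →
        ∀ (γ : (coneOff G 𝓗).Walk x y) (g : G.Walk x y) (φ : ℕ → ℕ) (C : Set ℕ),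
          IsDeelectrification G 𝓗 γ g φ C →
          θ ≤ (γ.length : ℝ) ∨
            ∃ i < γ.length, i ∈ C ∧
              θ ≤ (G.dist (γ.getVert i) (γ.getVert (i + 1)) : ℝ) := by
  intro θ hθ
  set M := max θ 1 with hM
  have hM1 : (1:ℝ) ≤ M := le_max_right _ _
  have hMθ : θ ≤ M := le_max_left _ _
  have hM0 : (0:ℝ) < M := lt_of_lt_of_le one_pos hM1
  refine ⟨M * M, ?_⟩
  intro V G 𝓗 _ _ x y hT γ g φ C hde
  by_contra hcon
  push_neg at hcon
  obtain ⟨hlen, hpieces⟩ := hcon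
  obtain ⟨hφ0, hφlen, -, hC, hnC⟩ := hde
  have key : ∀ n, n ≤ γ.length → (φ n : ℝ) ≤ n * M := by
    intro n
    induction n with
    | zero => intro _; simp [hφ0]
    | succ k ih =>
      intro hk
      have hk' : k < γ.length := Nat.lt_of_succ_le hk
      have ihk := ih (le_of_lt hk')
      by_cases hkC : k ∈ C
      · obtain ⟨-, heq⟩ := hC k hk' hkC
        have hd : (G.dist (γ.getVert k) (γ.getVert (k+1)) : ℝ) ≤ M :=
          le_trans (le_of_lt (hpieces k hk' hkC)) hMθ
        have hcast : (φ (k+1) : ℝ) =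
            (φ k : ℝ) + (G.dist (γ.getVert k) (γ.getVert (k+1)) : ℝ) := by
          rw [heq]; push_cast; ring
        rw [hcast]
        push_cast
        nlinarith
      · obtain ⟨-, heq⟩ := hnC k hk' hkC
        have hcast : (φ (k+1) : ℝ) = (φ k : ℝ) + 1 := by rw [heq]; push_cast; ring
        rw [hcast]
        push_cast
        nlinarith
  have h1 : (g.length : ℝ) ≤ (γ.length : ℝ) * M := by
    rw [← hφlen]; exact key _ le_rfl
  have h2 : (G.dist x y : ℝ) ≤ (g.length : ℝ) := by exact_mod_cast G.dist_le g
  have h3 : (γ.length : ℝ) * M < θ * M := mul_lt_mul_of_pos_right hlen hM0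
  have h4 : θ * M ≤ M * M := mul_le_mul_of_nonneg_right hMθ hM0.le
  linarith
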